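/- If a sequent Γ ⇒ Δ is provable in Grz∞, then for any finite set of formulas Λ, the sequent Λ*, Γ ⇒ Δ is provable in the finitary calculus Grz_Seq, where Λ* = {□(A → □A) : A ∈ Λ}. In particular (taking Λ = ∅), provability in Grz∞ implies provability in Grz_Seq. -/
import Mathlib


/-- Modal formulas of the Grzegorczyk logic: ⊥, atoms, →, □. -/
inductive Formula : Type
  | bot : Formula
  | atom : ℕ → Formula
  | imp : Formula → Formula → Formula
  | box : Formula → Formula
deriving DecidableEq

/-- A sequent Γ ⇒ Δ is a pair of finite multisets of formulas. -/
abbrev Sequent : Type := Multiset Formula × Multiset Formula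

/-- Names of the inference rules of Grz∞ + cut (including the two kinds of initial sequents). -/
inductive Rule : Type
  | ax | axBot | impL | impR | refl | box | cut
deriving DecidableEq

/-- □Π for a multiset Π. -/
def boxed (P : Multiset Formula) : Multiset Formula := P.map Formula.box

/-- `Inst r s p₁ p₂` : the rule `r` has a (correct) instance with conclusion `s`,
first premise `p₁` and second premise `p₂` (`none` = no such premise). -/
inductive Inst : Rule → Sequent → Option Sequent → Option Sequent → Prop
  | ax (Γ Δ : Multiset Formula) (p : ℕ) :
      Inst .ax (Formula.atom p ::ₘ Γ, Formula.atom p ::ₘ Δ) none none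
  | axBot (Γ Δ : Multiset Formula) :
      Inst .axBot (Formula.bot ::ₘ Γ, Δ) none none
  | impL (Γ Δ : Multiset Formula) (A B : Formula) :
      Inst .impL (Formula.imp A B ::ₘ Γ, Δ) (some (B ::ₘ Γ, Δ)) (some (Γ, A ::ₘ Δ))
  | impR (Γ Δ : Multiset Formula) (A B : Formula) :
      Inst .impR (Γ, Formula.imp A B ::ₘ Δ) (some (A ::ₘ Γ, B ::ₘ Δ)) none
  | refl (Γ Δ : Multiset Formula) (A : Formula) :
      Inst .refl (Formula.box A ::ₘ Γ, Δ) (some (A ::ₘ Formula.box A ::ₘ Γ, Δ)) none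
  | box (Γ Δ : Multiset Formula) (A : Formula) (P : Multiset Formula) :
      Inst .box (Γ + boxed P, Formula.box A ::ₘ Δ) (some (Γ + boxed P, A ::ₘ Δ))
        (some (boxed P, {A}))
  | cut (Γ Δ : Multiset Formula) (A : Formula) :
      Inst .cut (Γ, Δ) (some (Γ, A ::ₘ Δ)) (some (A ::ₘ Γ, Δ))

/-- A labelling of tree addresses (lists of booleans; `true` = second/right child)
by a rule name together with a sequent; `none` means the address is outside the tree. -/
abbrev Lab : Type := List Bool → Option (Rule × Sequent)

/-- The labelling of the subtree at child `i`. -/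
def shift (i : Bool) (l : Lab) : Lab := fun a => l (i :: a)

/-- An ∞-proof in Grz∞ + cut: a possibly infinite tree of sequents built according to
the rules, in which every infinite branch passes through the right premise of the
rule (□) infinitely many times. -/
structure InfProof : Type where
  lab : Lab
  root_some : (lab []).isSome
  nojunk : ∀ (a : List Bool) (i : Bool), lab a = none → lab (a ++ [i]) = none
  step : ∀ (a : List Bool) (r : Rule) (s : Sequent), lab a = some (r, s) →
      Inst r s ((lab (a ++ [false])).map Prod.snd) ((lab (a ++ [true])).map Prod.snd)
  branch : ∀ f : ℕ → Bool, (∀ n : ℕ, (lab ((List.range n).map f)).isSome) →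
      ∀ N : ℕ, ∃ n : ℕ, N ≤ n ∧ f n = true ∧
        (lab ((List.range n).map f)).map Prod.fst = some Rule.box

/-- The sequent at the root of an ∞-proof. -/
def rootSeq (π : InfProof) : Sequent := ((π.lab []).map Prod.snd).getD (0, 0)

/-- `Proves π S` : the ∞-proof `π` is an ∞-proof of the sequent `S`. -/
def Proves (π : InfProof) (S : Sequent) : Prop := ∃ r : Rule, π.lab [] = some (r, S)

/-- An ∞-proof contains no application of the cut rule (i.e. it is a proof of Grz∞). -/
def NoCut (π : InfProof) : Prop := ∀ (a : List Bool) (r : Rule) (s : Sequent),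
  π.lab a = some (r, s) → r ≠ Rule.cut

/-- Membership of an address in the main fragment: no proper passage through a
right premise of (□) strictly below it. -/
def InMain (l : Lab) (a : List Bool) : Prop :=
  (l a).isSome ∧ ∀ (b c : List Bool), a = b ++ true :: c →
    (l b).map Prod.fst = some Rule.box → c = []

/-- The local height |π| : the length of the longest branch in the main fragment. -/
noncomputable def height (l : Lab) : ℕ := sSup {n : ℕ | ∃ a : List Bool, InMain l a ∧ a.length = n}

/-- The relations ∼ₙ on ∞-proofs (presented on labellings), defined inductively:
π ∼₀ τ always; a single-node proof is ∼ₙ-related to itself; proofs ending in the same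
instance of (→L), (cut), (→R), (refl) are ∼ₙ-related when their immediate subproofs are;
proofs ending in the same instance of (□) are ∼ₙ₊₁-related when the left-premise subproofs
are ∼ₙ₊₁-related and the right-premise subproofs are ∼ₙ-related. -/
inductive Sim : ℕ → Lab → Lab → Prop
  | zero (l m : Lab) : Sim 0 l m
  | leaf (n : ℕ) (l : Lab) : height l = 0 → Sim n l l
  | bin (n : ℕ) (l m : Lab) (r : Rule) (s : Sequent) :
      (r = Rule.impL ∨ r = Rule.cut) →
      l [] = some (r, s) → m [] = some (r, s) →
      (l [false]).map Prod.snd = (m [false]).map Prod.snd →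
      (l [true]).map Prod.snd = (m [true]).map Prod.snd →
      Sim n (shift false l) (shift false m) → Sim n (shift true l) (shift true m) →
      Sim n l m
  | un (n : ℕ) (l m : Lab) (r : Rule) (s : Sequent) :
      (r = Rule.impR ∨ r = Rule.refl) →
      l [] = some (r, s) → m [] = some (r, s) →
      (l [false]).map Prod.snd = (m [false]).map Prod.snd →
      Sim n (shift false l) (shift false m) →
      Sim n l m
  | box (n : ℕ) (l m : Lab) (s : Sequent) :
      l [] = some (Rule.box, s) → m [] = some (Rule.box, s) →
      (l [false]).map Prod.snd = (m [false]).map Prod.snd →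
      (l [true]).map Prod.snd = (m [true]).map Prod.snd →
      Sim (n + 1) (shift false l) (shift false m) → Sim n (shift true l) (shift true m) →
      Sim (n + 1) l m

/-- The sets 𝒫ₙ of ∞-proofs (presented on labellings), defined inductively:
𝒫₀ is everything; single-node proofs are in every 𝒫ₙ; (→L), (→R), (refl) preserve
membership in 𝒫ₙ; a proof ending in (□) with left-premise subproof in 𝒫ₙ₊₁ and
right-premise subproof in 𝒫ₙ is in 𝒫ₙ₊₁. -/
inductive MemP : ℕ → Lab → Prop
  | zero (l : Lab) : MemP 0 l
  | leaf (n : ℕ) (l : Lab) : height l = 0 → MemP n l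
  | bin (n : ℕ) (l : Lab) (s : Sequent) :
      l [] = some (Rule.impL, s) →
      MemP n (shift false l) → MemP n (shift true l) → MemP n l
  | un (n : ℕ) (l : Lab) (r : Rule) (s : Sequent) :
      (r = Rule.impR ∨ r = Rule.refl) →
      l [] = some (r, s) → MemP n (shift false l) → MemP n l
  | box (n : ℕ) (l : Lab) (s : Sequent) :
      l [] = some (Rule.box, s) →
      MemP (n + 1) (shift false l) → MemP n (shift true l) → MemP (n + 1) l

/- The metric d(π,τ) = 2^(−sup{n : π ∼ₙ τ}), with 2^(−∞) = 0. -/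
open Classical in
noncomputable def pdist (π τ : InfProof) : ℝ :=
  if ∀ n : ℕ, Sim n π.lab τ.lab then 0
  else (2 : ℝ) ^ (-((sSup {n : ℕ | Sim n π.lab τ.lab} : ℕ) : ℤ))

/-- A mapping on ∞-proofs is nonexpansive if it preserves all relations ∼ₙ. -/
def Nonexpansive (f : InfProof → InfProof) : Prop :=
  ∀ (n : ℕ) (π τ : InfProof), Sim n π.lab τ.lab → Sim n (f π).lab (f τ).lab

/-- A mapping is adequate if it is nonexpansive, maps 𝒫₁ into 𝒫₁,
and does not increase local height. -/
def Adequate (f : InfProof → InfProof) : Prop :=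
  Nonexpansive f ∧ (∀ π : InfProof, MemP 1 π.lab → MemP 1 (f π).lab) ∧
    ∀ π : InfProof, height (f π).lab ≤ height π.lab

/-- The set 𝒫₁ of ∞-proofs whose main fragment is cut-free, as a subtype. -/
abbrev P1 : Type := {π : InfProof // MemP 1 π.lab}

/-- An A-reducing mapping: a nonexpansive map ℛ : 𝒫₁ × 𝒫₁ → 𝒫₁ such that
ℛ(π′,π″) proves Γ ⇒ Δ whenever π′ proves Γ ⇒ Δ, A and π″ proves A, Γ ⇒ Δ. -/
def Reducing (A : Formula) (R : P1 → P1 → P1) : Prop :=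
  (∀ (n : ℕ) (p₁ p₂ q₁ q₂ : P1), Sim n p₁.1.lab q₁.1.lab → Sim n p₂.1.lab q₂.1.lab →
      Sim n (R p₁ p₂).1.lab (R q₁ q₂).1.lab) ∧
  ∀ (p₁ p₂ : P1) (Γ Δ : Multiset Formula),
    Proves p₁.1 (Γ, A ::ₘ Δ) → Proves p₂.1 (A ::ₘ Γ, Δ) → Proves (R p₁ p₂).1 (Γ, Δ)

/-- A mapping is root-preserving if it maps ∞-proofs to ∞-proofs of the same sequent. -/
def RootPres (f : InfProof → InfProof) : Prop :=
  ∀ (π : InfProof) (S : Sequent), Proves π S → Proves (f π) S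

/-- The uniform distance on mappings of ∞-proofs. -/
noncomputable def udist (U V : InfProof → InfProof) : ℝ :=
  ⨆ π : InfProof, pdist (U π) (V π)

/- The immediate subproof of `π` at child `i` (junk value `π` if there is none). -/
open Classical in
noncomputable def subtree (π : InfProof) (i : Bool) : InfProof :=
  if h : ∃ τ : InfProof, τ.lab = shift i π.lab then h.choose else π

/-- `IsFOp E F` : `F` is the operator ℱ (relative to the one-step cut-elimination map
`E` = ℰ*) defined by: on proofs with cut-free main fragment it commutes with the last
rule, applying `U` at right premises of (□) and fixing single-node proofs; on other
proofs it first applies `E`. -/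
def IsFOp (E : InfProof → InfProof) (F : (InfProof → InfProof) → InfProof → InfProof) : Prop :=
  ∀ (U : InfProof → InfProof) (π : InfProof),
    (MemP 1 π.lab → height π.lab = 0 → F U π = π) ∧
    (∀ (r : Rule) (s : Sequent), MemP 1 π.lab → π.lab [] = some (r, s) →
        r ≠ Rule.box → r ≠ Rule.cut → height π.lab ≠ 0 →
        (F U π).lab [] = some (r, s) ∧
        shift false (F U π).lab = (F U (subtree π false)).lab ∧
        (r = Rule.impL → shift true (F U π).lab = (F U (subtree π true)).lab)) ∧
    (∀ s : Sequent, MemP 1 π.lab → π.lab [] = some (Rule.box, s) →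
        (F U π).lab [] = some (Rule.box, s) ∧
        shift false (F U π).lab = (F U (subtree π false)).lab ∧
        shift true (F U π).lab = (U (subtree π true)).lab) ∧
    (¬ MemP 1 π.lab → F U π = F U (E π))

/-- Membership in 𝒩ₙ : a root-preserving nonexpansive map whose image lies in 𝒫ₙ. -/
def InN (n : ℕ) (U : InfProof → InfProof) : Prop :=
  Nonexpansive U ∧ RootPres U ∧ ∀ π : InfProof, MemP n (U π).lab

/-- The finitary sequent calculus Grz_Seq (with cut allowed iff the flag is `true`). -/
inductive GrzSeq : Bool → Sequent → Prop
  | ax (c : Bool) (Γ Δ : Multiset Formula) (A : Formula) :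
      GrzSeq c (A ::ₘ Γ, A ::ₘ Δ)
  | bot (c : Bool) (Γ Δ : Multiset Formula) :
      GrzSeq c (Formula.bot ::ₘ Γ, Δ)
  | impL (c : Bool) (Γ Δ : Multiset Formula) (A B : Formula) :
      GrzSeq c (B ::ₘ Γ, Δ) → GrzSeq c (Γ, A ::ₘ Δ) →
      GrzSeq c (Formula.imp A B ::ₘ Γ, Δ)
  | impR (c : Bool) (Γ Δ : Multiset Formula) (A B : Formula) :
      GrzSeq c (A ::ₘ Γ, B ::ₘ Δ) → GrzSeq c (Γ, Formula.imp A B ::ₘ Δ)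
  | refl (c : Bool) (Γ Δ : Multiset Formula) (B : Formula) :
      GrzSeq c (B ::ₘ Formula.box B ::ₘ Γ, Δ) → GrzSeq c (Formula.box B ::ₘ Γ, Δ)
  | grz (c : Bool) (Γ Δ : Multiset Formula) (A : Formula) (P : Multiset Formula) :
      GrzSeq c (Formula.box (Formula.imp A (Formula.box A)) ::ₘ boxed P, {A}) →
      GrzSeq c (Γ + boxed P, Formula.box A ::ₘ Δ)
  | cut (Γ Δ : Multiset Formula) (A : Formula) :
      GrzSeq true (Γ, A ::ₘ Δ) → GrzSeq true (A ::ₘ Γ, Δ) → GrzSeq true (Γ, Δ)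

/-! ### Auxiliary development -/

namespace GrzAux

open Formula

/-- Subformulas of a formula (including itself). -/
def sub : Formula → Finset Formula
  | .bot => {.bot}
  | .atom p => {.atom p}
  | .imp A B => insert (.imp A B) (sub A ∪ sub B)
  | .box A => insert (.box A) (sub A)

lemma self_mem_sub (A : Formula) : A ∈ sub A := by
  cases A <;> simp [sub]

lemma sub_box_subset (A : Formula) : sub A ⊆ sub (Formula.box A) := by
  intro x hx; simp [sub, hx]

/-- Subformulas of a multiset of formulas. -/
def subM (Γ : Multiset Formula) : Finset Formula := Γ.toFinset.biUnion sub

lemma sub_subset_subM {A : Formula} {Γ : Multiset Formula} (h : A ∈ Γ) :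
    sub A ⊆ subM Γ := by
  intro x hx; simp [subM, Finset.mem_biUnion]; exact ⟨A, h, hx⟩

lemma subM_cons (A : Formula) (Γ : Multiset Formula) :
    subM (A ::ₘ Γ) = sub A ∪ subM Γ := by
  ext x; simp [subM, Finset.mem_biUnion, Multiset.mem_cons, or_and_right, exists_or]

lemma subM_add (Γ Γ' : Multiset Formula) :
    subM (Γ + Γ') = subM Γ ∪ subM Γ' := by
  ext x; simp [subM, Finset.mem_biUnion, Multiset.mem_add, or_and_right, exists_or]

/-- Subformulas of a sequent. -/
def subS (S : Sequent) : Finset Formula := subM S.1 ∪ subM S.2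

/-- Weakening is admissible in `GrzSeq`. -/
lemma GrzSeq.weak : ∀ {c : Bool} {S : Sequent}, GrzSeq c S →
    ∀ (Γ' Δ' : Multiset Formula), GrzSeq c (Γ' + S.1, Δ' + S.2) := by
  intro c S h
  induction h with
  | ax c Γ Δ A =>
      intro Γ' Δ'
      simpa [Multiset.add_cons] using GrzSeq.ax c (Γ' + Γ) (Δ' + Δ) A
  | bot c Γ Δ =>
      intro Γ' Δ'
      simpa [Multiset.add_cons] using GrzSeq.bot c (Γ' + Γ) (Δ' + Δ)
  | impL c Γ Δ A B h1 h2 ih1 ih2 =>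
      intro Γ' Δ'
      have := GrzSeq.impL c (Γ' + Γ) (Δ' + Δ) A B
        (by simpa [Multiset.add_cons] using ih1 Γ' Δ')
        (by simpa [Multiset.add_cons] using ih2 Γ' Δ')
      simpa [Multiset.add_cons] using this
  | impR c Γ Δ A B h1 ih1 =>
      intro Γ' Δ'
      have := GrzSeq.impR c (Γ' + Γ) (Δ' + Δ) A B
        (by simpa [Multiset.add_cons] using ih1 Γ' Δ')
      simpa [Multiset.add_cons] using this
  | refl c Γ Δ B h1 ih1 =>
      intro Γ' Δ'
      have := GrzSeq.refl c (Γ' + Γ) (Δ' + Δ) B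
        (by simpa [Multiset.add_cons] using ih1 Γ' Δ')
      simpa [Multiset.add_cons] using this
  | grz c Γ Δ A P h1 _ =>
      intro Γ' Δ'
      have := GrzSeq.grz c (Γ' + Γ) (Δ' + Δ) A P h1
      simpa [Multiset.add_cons, add_assoc] using this
  | cut Γ Δ A h1 h2 ih1 ih2 =>
      intro Γ' Δ'
      exact GrzSeq.cut (Γ' + Γ) (Δ' + Δ) A
        (by simpa [Multiset.add_cons] using ih1 Γ' Δ')
        (by simpa [Multiset.add_cons] using ih2 Γ' Δ')

end GrzAux
namespace GrzAux

lemma none_extend {l : Lab} (hn : ∀ (a : List Bool) (i : Bool), l a = none → l (a ++ [i]) = none)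
    (a : List Bool) (b : List Bool) (h : l a = none) : l (a ++ b) = none := by
  induction b using List.reverseRecOn with
  | nil => simpa using h
  | append_singleton b i ih =>
      have := hn (a ++ b) i ih
      simpa [List.append_assoc] using this

/-- The main fragment is downward closed. -/
lemma inMain_prefix {l : Lab}
    (hn : ∀ (a : List Bool) (i : Bool), l a = none → l (a ++ [i]) = none)
    {a b : List Bool} (h : InMain l (a ++ b)) : InMain l a := by
  constructor
  · by_contra hno
    have ha0 : l a = none := Option.not_isSome_iff_eq_none.mp hno
    have hs := h.1
    rw [none_extend hn a b ha0] at hs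
    exact absurd hs (by simp)
  · intro b' c hdec hbox
    have h2 := h.2 b' (c ++ b) (by rw [hdec]; simp) hbox
    rcases List.append_eq_nil_iff.mp h2 with ⟨hc, _⟩
    exact hc

/-- The set of lengths of addresses in the main fragment. -/
def mainSet (l : Lab) : Set ℕ := {n | ∃ a : List Bool, InMain l a ∧ a.length = n}

lemma height_def (l : Lab) : height l = sSup (mainSet l) := rfl

/-- Unboundedness of the main fragment below an address. -/
def Unb (l : Lab) (a : List Bool) : Prop :=
  ∀ n : ℕ, ∃ c : List Bool, n ≤ c.length ∧ InMain l (a ++ c)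

/-- König's lemma: the main fragment of an ∞-proof has bounded depth. -/
lemma bddAbove_mainSet (π : InfProof) : BddAbove (mainSet π.lab) := by
  by_contra hub
  set l := π.lab with hl
  -- the root is unbounded
  have hnil : Unb l [] := by
    intro n
    rcases not_bddAbove_iff.mp hub n with ⟨m, ⟨a, ha, hlen⟩, hnm⟩
    exact ⟨a, by simpa [hlen] using hnm.le, by simpa using ha⟩
  -- unboundedness propagates to a child
  have hstep : ∀ a : List Bool, Unb l a → ∃ i : Bool, Unb l (a ++ [i]) := by
    intro a ha
    by_contra hno
    push_neg at hno
    simp only [Unb, not_forall, not_exists, not_and] at hno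
    obtain ⟨n₀, hn₀⟩ := hno false
    obtain ⟨n₁, hn₁⟩ := hno true
    obtain ⟨c, hc1, hc2⟩ := ha (max n₀ n₁ + 1)
    match c, hc1 with
    | i :: c', hc1 =>
      have hlen : max n₀ n₁ ≤ c'.length := by simpa using hc1
      have hmem : InMain l ((a ++ [i]) ++ c') := by simpa using hc2
      cases i with
      | false => exact hn₀ c' (le_trans (le_max_left _ _) hlen) hmem
      | true => exact hn₁ c' (le_trans (le_max_right _ _) hlen) hmem
  -- choose the bits
  have hbit : ∀ a : List Bool, ∃ i : Bool, Unb l a → Unb l (a ++ [i]) := by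
    intro a
    by_cases h : Unb l a
    · exact (hstep a h).imp (fun i hi => fun _ => hi)
    · exact ⟨false, fun h' => absurd h' h⟩
  choose bit hbitspec using hbit
  -- build the branch
  let g : ℕ → List Bool := fun n => Nat.rec [] (fun _ a => a ++ [bit a]) n
  have hg0 : g 0 = [] := rfl
  have hgs : ∀ n, g (n + 1) = g n ++ [bit (g n)] := fun n => rfl
  have hunb : ∀ n, Unb l (g n) := by
    intro n
    induction n with
    | zero => exact hnil
    | succ n ih => rw [hgs]; exact hbitspec (g n) ih
  have hmain : ∀ n, InMain l (g n) := by
    intro n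
    obtain ⟨c, _, hc⟩ := hunb n 0
    exact inMain_prefix π.nojunk hc
  let f : ℕ → Bool := fun n => bit (g n)
  have hpre : ∀ n, (List.range n).map f = g n := by
    intro n
    induction n with
    | zero => rfl
    | succ n ih => rw [List.range_succ, List.map_append, ih, hgs]; rfl
  have hsome : ∀ n, (l ((List.range n).map f)).isSome := by
    intro n
    rw [hpre]
    exact (hmain n).1
  obtain ⟨n, _, hfn, hbox⟩ := π.branch f hsome 0
  rw [hpre] at hbox
  have hfn' : bit (g n) = true := hfn
  have hgn1 : g (n+1) = g n ++ [true] := by rw [hgs n, hfn']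
  have hdec : g (n + 2) = g n ++ true :: [bit (g n ++ [true])] := by
    show g ((n+1)+1) = _
    rw [hgs (n+1), hgn1]
    simp
  have := (hmain (n + 2)).2 (g n) [bit (g n ++ [true])] hdec hbox
  simp at this

/-- The subtree labelling at a child of the root, as an ∞-proof. -/
def childPf (π : InfProof) (i : Bool) (h : (π.lab [i]).isSome) : InfProof where
  lab := shift i π.lab
  root_some := h
  nojunk := fun a j ha => π.nojunk (i :: a) j ha
  step := fun a r s ha => π.step (i :: a) r s ha
  branch := by
    intro f hf N
    let g : ℕ → Bool := fun n => if n = 0 then i else f (n - 1)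
    have hpre : ∀ n, (List.range (n + 1)).map g = i :: (List.range n).map f := by
      intro n
      have hcg : ∀ k ∈ List.range n, (g ∘ Nat.succ) k = f k := fun k _ => by simp [g]
      rw [List.range_succ_eq_map, List.map_cons, List.map_map, List.map_congr_left hcg]
      rfl
    have hsome : ∀ n, (π.lab ((List.range n).map g)).isSome := by
      intro n
      cases n with
      | zero => exact π.root_some
      | succ n => rw [hpre]; exact hf n
    obtain ⟨n, hN, hg, hbox⟩ := π.branch g hsome (N + 1)
    match n, hN with
    | n + 1, hN =>
      refine ⟨n, by omega, ?_, ?_⟩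
      · simpa [g] using hg
      · rw [hpre] at hbox; exact hbox

lemma childPf_lab (π : InfProof) (i : Bool) (h : (π.lab [i]).isSome) :
    (childPf π i h).lab = shift i π.lab := rfl

lemma childPf_noCut {π : InfProof} (hnc : NoCut π) (i : Bool) (h : (π.lab [i]).isSome) :
    NoCut (childPf π i h) := fun a r s ha => hnc (i :: a) r s ha

lemma childPf_proves {π : InfProof} {i : Bool} {s : Sequent}
    (h : (π.lab [i]).map Prod.snd = some s) (hs : (π.lab [i]).isSome) :
    Proves (childPf π i hs) s := by
  rcases Option.map_eq_some_iff.mp h with ⟨x, hx, hx2⟩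
  exact ⟨x.1, by show π.lab [i] = _; rw [hx, ← hx2]⟩

lemma isSome_of_map {π : InfProof} {i : Bool} {s : Sequent}
    (h : (π.lab [i]).map Prod.snd = some s) : (π.lab [i]).isSome := by
  rcases Option.map_eq_some_iff.mp h with ⟨x, hx, _⟩
  simp [hx]

/-- Height strictly decreases when passing to a premise in the main fragment. -/
lemma height_child_lt (π : InfProof) (i : Bool) (hsome : (π.lab [i]).isSome)
    (hnb : i = true → (π.lab []).map Prod.fst ≠ some Rule.box) :
    height (shift i π.lab) < height π.lab := by
  have hbdd := bddAbove_mainSet π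
  have hmono : ∀ n ∈ mainSet (shift i π.lab), n + 1 ∈ mainSet π.lab := by
    rintro n ⟨c, hc, hlen⟩
    refine ⟨i :: c, ⟨hc.1, ?_⟩, by simp [hlen]⟩
    intro b c' hdec hbox
    cases b with
    | nil =>
        simp only [List.nil_append, List.cons.injEq] at hdec
        exact absurd hbox (hnb hdec.1)
    | cons j b' =>
        simp only [List.cons_append, List.cons.injEq] at hdec
        obtain ⟨hj, hcc⟩ := hdec
        subst hj
        exact hc.2 b' c' hcc hbox
  have hne' : (mainSet (shift i π.lab)).Nonempty :=
    ⟨0, [], ⟨hsome, by intro b c hbc _; simp at hbc⟩, rfl⟩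
  have hbdd' : BddAbove (mainSet (shift i π.lab)) := by
    obtain ⟨M, hM⟩ := hbdd
    exact ⟨M, fun n hn => by have := hM (hmono n hn); omega⟩
  have hmem := Nat.sSup_mem hne' hbdd'
  have hle : sSup (mainSet (shift i π.lab)) + 1 ≤ sSup (mainSet π.lab) :=
    le_csSup hbdd (hmono _ hmem)
  show sSup (mainSet (shift i π.lab)) < sSup (mainSet π.lab)
  omega

end GrzAux
namespace GrzAux

lemma subM_singleton (A : Formula) : subM {A} = sub A := by
  ext x; simp [subM]

lemma card_mono (Λ : Finset Formula) {S T : Finset Formula} (h : S ⊆ T) :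
    (S \ Λ).card ≤ (T \ Λ).card :=
  Finset.card_le_card (Finset.sdiff_subset_sdiff h (Finset.Subset.refl _))

lemma sub_imp_l (A B : Formula) : sub A ⊆ sub (Formula.imp A B) := by
  intro x hx; simp [sub]; tauto

lemma sub_imp_r (A B : Formula) : sub B ⊆ sub (Formula.imp A B) := by
  intro x hx; simp [sub]; tauto

/-- Λ* : the multiset □(A → □A) for A ∈ Λ. -/
def star (Λ : Finset Formula) : Multiset Formula :=
  Multiset.map (fun A => Formula.box (Formula.imp A (Formula.box A))) Λ.val

/-- The key lemma: main induction on the number of subformulas outside Λ,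
with subinduction on the local height of the ∞-proof. -/
lemma key : ∀ (k h : ℕ) (Λ : Finset Formula) (π : InfProof) (Γ Δ : Multiset Formula),
    NoCut π → Proves π (Γ, Δ) → ((subS (Γ, Δ)) \ Λ).card ≤ k → height π.lab ≤ h →
    GrzSeq false (star Λ + Γ, Δ) := by
  intro k
  induction k using Nat.strong_induction_on with
  | _ k IHk =>
  intro h
  induction h using Nat.strong_induction_on with
  | _ h IHh =>
  intro Λ π Γ Δ hnc hpr hcard hht
  obtain ⟨r, hroot⟩ := hpr
  have hstep := π.step [] r (Γ, Δ) hroot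
  simp only [List.nil_append] at hstep
  generalize hF : (π.lab [false]).map Prod.snd = oF at hstep
  generalize hT : (π.lab [true]).map Prod.snd = oT at hstep
  cases hstep with
  | ax Γ' Δ' p =>
      rw [Multiset.add_cons]
      exact GrzSeq.ax _ _ _ _
  | axBot Γ' Δ' =>
      rw [Multiset.add_cons]
      exact GrzSeq.bot _ _ _
  | impL Γ' Δ A B =>
      have hsF := isSome_of_map hF
      have hsT := isSome_of_map hT
      have hhF : height (childPf π false hsF).lab < h :=
        lt_of_lt_of_le (height_child_lt π false hsF (by simp)) hht
      have hhT : height (childPf π true hsT).lab < h :=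
        lt_of_lt_of_le (height_child_lt π true hsT (fun _ => by rw [hroot]; simp)) hht
      have hsub1 : subS (B ::ₘ Γ', Δ) ⊆ subS (Formula.imp A B ::ₘ Γ', Δ) := by
        intro x hx
        simp only [subS, subM_cons, Finset.mem_union] at hx ⊢
        have := @sub_imp_r A B x
        tauto
      have hsub2 : subS (Γ', A ::ₘ Δ) ⊆ subS (Formula.imp A B ::ₘ Γ', Δ) := by
        intro x hx
        simp only [subS, subM_cons, Finset.mem_union] at hx ⊢
        have := @sub_imp_l A B x
        tauto
      have D1 := IHh _ hhF Λ (childPf π false hsF) _ _ (childPf_noCut hnc false hsF)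
        (childPf_proves hF hsF) (le_trans (card_mono Λ hsub1) hcard) le_rfl
      have D2 := IHh _ hhT Λ (childPf π true hsT) _ _ (childPf_noCut hnc true hsT)
        (childPf_proves hT hsT) (le_trans (card_mono Λ hsub2) hcard) le_rfl
      rw [Multiset.add_cons]
      exact GrzSeq.impL false _ _ A B (by rwa [Multiset.add_cons] at D1) D2
  | impR Γ Δ' A B =>
      have hsF := isSome_of_map hF
      have hhF : height (childPf π false hsF).lab < h :=
        lt_of_lt_of_le (height_child_lt π false hsF (by simp)) hht
      have hsub1 : subS (A ::ₘ Γ, B ::ₘ Δ') ⊆ subS (Γ, Formula.imp A B ::ₘ Δ') := by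
        intro x hx
        simp only [subS, subM_cons, Finset.mem_union] at hx ⊢
        have h1 := @sub_imp_l A B x
        have h2 := @sub_imp_r A B x
        tauto
      have D1 := IHh _ hhF Λ (childPf π false hsF) _ _ (childPf_noCut hnc false hsF)
        (childPf_proves hF hsF) (le_trans (card_mono Λ hsub1) hcard) le_rfl
      rw [Multiset.add_cons] at D1
      exact GrzSeq.impR false _ _ A B D1
  | refl Γ' Δ A =>
      have hsF := isSome_of_map hF
      have hhF : height (childPf π false hsF).lab < h :=
        lt_of_lt_of_le (height_child_lt π false hsF (by simp)) hht
      have hsub1 : subS (A ::ₘ Formula.box A ::ₘ Γ', Δ) ⊆ subS (Formula.box A ::ₘ Γ', Δ) := by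
        intro x hx
        simp only [subS, subM_cons, Finset.mem_union] at hx ⊢
        have := @sub_box_subset A x
        tauto
      have D1 := IHh _ hhF Λ (childPf π false hsF) _ _ (childPf_noCut hnc false hsF)
        (childPf_proves hF hsF) (le_trans (card_mono Λ hsub1) hcard) le_rfl
      rw [Multiset.add_cons, Multiset.add_cons] at D1
      rw [Multiset.add_cons]
      exact GrzSeq.refl false _ _ A D1
  | box Γ' Δ' A P =>
      by_cases hA : A ∈ Λ
      · -- A ∈ Λ : use the left premise and □(A → □A) ∈ Λ*
        have hsF := isSome_of_map hF
        have hhF : height (childPf π false hsF).lab < h :=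
          lt_of_lt_of_le (height_child_lt π false hsF (by simp)) hht
        have hsub1 : subS (Γ' + boxed P, A ::ₘ Δ') ⊆
            subS (Γ' + boxed P, Formula.box A ::ₘ Δ') := by
          intro x hx
          simp only [subS, subM_cons, Finset.mem_union] at hx ⊢
          have := @sub_box_subset A x
          tauto
        have D1 := IHh _ hhF Λ (childPf π false hsF) _ _ (childPf_noCut hnc false hsF)
          (childPf_proves hF hsF) (le_trans (card_mono Λ hsub1) hcard) le_rfl
        -- split the star
        set s := Multiset.map (fun B => Formula.box (Formula.imp B (Formula.box B)))
          (Λ.val.erase A) with hs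
        have hstar : star Λ =
            Formula.box (Formula.imp A (Formula.box A)) ::ₘ s := by
          conv_lhs => rw [star, ← Multiset.cons_erase (Finset.mem_def.mp hA),
            Multiset.map_cons]
        rw [hstar, Multiset.cons_add]
        apply GrzSeq.refl false _ _ (Formula.imp A (Formula.box A))
        apply GrzSeq.impL false _ _ A (Formula.box A)
        · exact GrzSeq.ax _ _ _ _
        · -- weaken D1 on the right by □A
          rw [hstar, Multiset.cons_add] at D1
          have := GrzSeq.weak D1 0 {Formula.box A}
          simpa [Multiset.singleton_add, Multiset.cons_swap] using this
      · -- A ∉ Λ : main induction on the right premise with Λ ∪ {A}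
        have hsT := isSome_of_map hT
        have hAsub : A ∈ subS (Γ' + boxed P, Formula.box A ::ₘ Δ') := by
          simp only [subS, subM_cons, Finset.mem_union]
          exact Or.inr (Or.inl (by simp [sub, self_mem_sub]))
        have hssub : subS (boxed P, ({A} : Multiset Formula)) \ insert A Λ ⊂
            subS (Γ' + boxed P, Formula.box A ::ₘ Δ') \ Λ := by
          constructor
          · intro x hx
            rw [Finset.mem_sdiff] at hx ⊢
            obtain ⟨hx1, hx2⟩ := hx
            simp only [Finset.mem_insert, not_or] at hx2
            refine ⟨?_, hx2.2⟩
            simp only [subS, subM_cons, subM_add, subM_singleton, Finset.mem_union] at hx1 ⊢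
            have := @sub_box_subset A x
            tauto
          · intro hsub
            have hAmem : A ∈ subS (Γ' + boxed P, Formula.box A ::ₘ Δ') \ Λ :=
              Finset.mem_sdiff.mpr ⟨hAsub, hA⟩
            have := hsub hAmem
            rw [Finset.mem_sdiff] at this
            exact this.2 (Finset.mem_insert_self A Λ)
        have hklt : (subS (boxed P, ({A} : Multiset Formula)) \ insert A Λ).card < k :=
          lt_of_lt_of_le (Finset.card_lt_card hssub) hcard
        have D2 := IHk _ hklt (height (childPf π true hsT).lab) (insert A Λ)
          (childPf π true hsT) _ _ (childPf_noCut hnc true hsT)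
          (childPf_proves hT hsT) le_rfl le_rfl
        -- rearrange D2 and apply the grz rule
        have hins : star (insert A Λ) =
            Formula.box (Formula.imp A (Formula.box A)) ::ₘ star Λ := by
          rw [star, star, Finset.insert_val_of_notMem hA, Multiset.map_cons]
        rw [hins, Multiset.cons_add] at D2
        set Q := Multiset.map (fun B => Formula.imp B (Formula.box B)) Λ.val with hQdef
        have hQ : star Λ = boxed Q := by
          rw [star, hQdef, boxed, Multiset.map_map]
          rfl
        have hbQP : boxed (Q + P) = boxed Q + boxed P := Multiset.map_add _ _ _
        have hgoal_eq : star Λ + (Γ' + boxed P) = Γ' + boxed (Q + P) := by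
          rw [hQ, hbQP]
          abel
        rw [hgoal_eq]
        apply GrzSeq.grz false Γ' Δ' A (Q + P)
        rw [hbQP, ← hQ]
        exact D2
  | cut Γ' Δ' A =>
      exact absurd rfl (hnc [] _ _ hroot)

end GrzAux

/-- if Γ ⇒ Δ is provable in Grz∞, then Λ*, Γ ⇒ Δ is provable in Grz_Seq
for every finite set Λ of formulas; in particular Γ ⇒ Δ is provable in Grz_Seq. -/
theorem inf_to_seq (Γ Δ : Multiset Formula)
    (h : ∃ π : InfProof, NoCut π ∧ Proves π (Γ, Δ)) :
    (∀ Λ : Finset Formula,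
      GrzSeq false
        (Multiset.map (fun A => Formula.box (Formula.imp A (Formula.box A))) Λ.val + Γ, Δ)) ∧
    GrzSeq false (Γ, Δ) := by
  obtain ⟨π, hnc, hpr⟩ := h
  have main : ∀ Λ : Finset Formula, GrzSeq false (GrzAux.star Λ + Γ, Δ) := fun Λ =>
    GrzAux.key _ _ Λ π Γ Δ hnc hpr le_rfl le_rfl
  exact ⟨main, by simpa [GrzAux.star] using main ∅⟩
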